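/- Let G be a finite simple graph and let κ, τ : V(G) → ℤ be functions such that d_G(u) = τ(u) + κ(u) for every vertex u. Then a set I of vertices of G is κ-degenerate in G if and only if V(G) \ I is a dynamic monopoly of (G, τ). -/

import Mathlib

open SimpleGraph

universe u

/-- `H` is closed under the activation rule: any vertex with at least `τ u` neighbors
in `H` belongs to `H`. -/
def HullClosed {V : Type u} (G : SimpleGraph V) (τ : V → ℤ) (H : Set V) : Prop :=
  ∀ u : V, (τ u ≤ ((G.neighborSet u ∩ H).ncard : ℤ)) → u ∈ H

/-- The hull `H_{(G,τ)}(D)`: smallest superset of `D` closed under the activation rule. -/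
def hull {V : Type u} (G : SimpleGraph V) (τ : V → ℤ) (D : Set V) : Set V :=
  ⋂₀ {H : Set V | D ⊆ H ∧ HullClosed G τ H}

/-- `D` is a dynamic monopoly (target set) of `(G,τ)`. -/
def IsDynMonopoly {V : Type u} (G : SimpleGraph V) (τ : V → ℤ) (D : Set V) : Prop :=
  hull G τ D = Set.univ

/-- `dyn(G,τ)`: minimum order of a dynamic monopoly. -/
noncomputable def dynNum {V : Type u} (G : SimpleGraph V) (τ : V → ℤ) : ℕ :=
  sInf {k | ∃ D : Set V, IsDynMonopoly G τ D ∧ D.ncard = k}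

/-- `σ` is a partial incentive of `(G,τ)`. -/
def IsPartialIncentive {V : Type u} (G : SimpleGraph V) (τ : V → ℤ) (σ : V → ℕ) : Prop :=
  hull G (fun u => τ u - σ u) ∅ = Set.univ

/-- `pi(G,τ)`: minimum weight of a partial incentive. -/
noncomputable def piNum {V : Type u} [Fintype V] (G : SimpleGraph V) (τ : V → ℤ) : ℕ :=
  sInf {k | ∃ σ : V → ℕ, IsPartialIncentive G τ σ ∧ ∑ u, σ u = k}

/-- `I` is a `κ`-degenerate set in `G`: there is a linear order of `I` in which every
vertex has at most `κ u` neighbors among its predecessors. -/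
def Degenerate {V : Type u} (G : SimpleGraph V) (κ : V → ℤ) (I : Set V) : Prop :=
  ∃ l : List V, l.Nodup ∧ {v | v ∈ l} = I ∧
    ∀ i : Fin l.length,
      ((G.neighborSet (l.get i) ∩ {w | w ∈ l.take (i : ℕ)}).ncard : ℤ) ≤ κ (l.get i)

/-- The graph `G'` of Lemma 1: for every edge `uv` of `G` add an independent set of
`n` new vertices adjacent exactly to `u` and `v`. -/
def lemma1Graph {V : Type u} (G : SimpleGraph V) (n : ℕ) :
    SimpleGraph (V ⊕ (G.edgeSet × Fin n)) :=
  SimpleGraph.fromRel (fun x y =>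
    match x, y with
    | Sum.inl a, Sum.inl b => G.Adj a b
    | Sum.inl a, Sum.inr e => a ∈ (e.1.1 : Sym2 V)
    | _, _ => False)

/-- The graph `G'` of Lemma 2: to every vertex `u` with `τ u > 0` attach a path `P_u`
of order `τ u`, joining `u` to all vertices of `P_u`. -/
def attachPaths {V : Type u} (G : SimpleGraph V) (τ : V → ℤ) :
    SimpleGraph (V ⊕ (Σ u : V, Fin (τ u).toNat)) :=
  SimpleGraph.fromRel (fun x y =>
    match x, y with
    | Sum.inl a, Sum.inl b => G.Adj a b
    | Sum.inl a, Sum.inr s => a = s.1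
    | Sum.inr s, Sum.inr t => s.1 = t.1 ∧ (s.2 : ℕ) + 1 = (t.2 : ℕ)
    | _, _ => False)

/-- `G` contains `H` as a minor. -/
def HasMinor {V : Type u} {W : Type} (G : SimpleGraph V) (H : SimpleGraph W) : Prop :=
  ∃ φ : W → Set V,
    (∀ w, (φ w).Nonempty) ∧
    (∀ w, (G.induce (φ w)).Connected) ∧
    (Pairwise fun w w' => Disjoint (φ w) (φ w')) ∧
    ∀ w w', H.Adj w w' → ∃ a ∈ φ w, ∃ b ∈ φ w', G.Adj a b

/-- Planarity, via Wagner's theorem: no `K₅` minor and no `K_{3,3}` minor. -/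
def IsPlanar {V : Type u} (G : SimpleGraph V) : Prop :=
  ¬ HasMinor G (completeGraph (Fin 5)) ∧
  ¬ HasMinor G (completeBipartiteGraph (Fin 3) (Fin 3))

/-- Chordality: every cycle of length at least four has a chord. -/
def IsChordal {V : Type u} (G : SimpleGraph V) : Prop :=
  ∀ ⦃v : V⦄ (c : G.Walk v v), c.IsCycle → 4 ≤ c.length →
    ∃ u w, u ∈ c.support ∧ w ∈ c.support ∧ G.Adj u w ∧ s(u, w) ∉ c.edges

/-- `t`-connectedness: more than `t` vertices, and removing fewer than `t` vertices
leaves the graph connected. -/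
def TConnected {V : Type u} [Fintype V] (G : SimpleGraph V) (t : ℕ) : Prop :=
  t < Fintype.card V ∧ ∀ S : Set V, S.ncard < t → (G.induce (Sᶜ)).Connected

/-- Outside neighbors `N⁺(A)` of `A`. -/
def Nplus {V : Type u} (G : SimpleGraph V) (A : Set V) : Set V :=
  {v | v ∉ A ∧ ∃ u ∈ A, G.Adj u v}

/-- Boundary `N⁻(B) = N⁺(V ∖ B)` of `B`. -/
def Nminus {V : Type u} (G : SimpleGraph V) (B : Set V) : Set V :=
  Nplus G Bᶜ

/-- `B` is an `A`-strong region. -/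
def StrongRegion {V : Type u} (G : SimpleGraph V) (τ : V → ℤ) (A B : Set V) : Prop :=
  ¬ B ⊆ hull G τ (A ∪ Nplus G B)

/-- `G` has a tree-decomposition of width at most `w`. -/
def HasTreeDecompOfWidthLE {V : Type u} (G : SimpleGraph V) (w : ℕ) : Prop :=
  ∃ (ι : Type) (T : SimpleGraph ι) (bag : ι → Set V),
    T.IsTree ∧
    (∀ v, ∃ t, v ∈ bag t) ∧
    (∀ u v, G.Adj u v → ∃ t, u ∈ bag t ∧ v ∈ bag t) ∧
    (∀ v, (T.induce {t | v ∈ bag t}).Connected) ∧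
    (∀ t, (bag t).ncard ≤ w + 1)


section aux
variable {V : Type u} {G : SimpleGraph V} {τ : V → ℤ}

lemma my_subset_hull (D : Set V) : D ⊆ hull G τ D :=
  fun _ hv => Set.mem_sInter.2 fun _ hH => hH.1 hv

lemma my_hull_subset {D H : Set V} (hD : D ⊆ H) (hH : HullClosed G τ H) :
    hull G τ D ⊆ H := Set.sInter_subset_of_mem ⟨hD, hH⟩

lemma my_hull_mono {D D' : Set V} (h : D ⊆ D') : hull G τ D ⊆ hull G τ D' := by
  intro v hv
  exact Set.mem_sInter.2 fun H hH => Set.mem_sInter.1 hv H ⟨h.trans hH.1, hH.2⟩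

lemma my_ncard_neighborSet {V : Type} [Fintype V] (G : SimpleGraph V) [DecidableRel G.Adj]
    (v : V) : (G.neighborSet v).ncard = G.degree v := by
  rw [← Nat.card_coe_set_eq, Nat.card_eq_fintype_card, card_neighborSet_eq_degree]

end aux

/-- duality between κ-degenerate sets and dynamic monopolies. -/
theorem stmt_0 {V : Type} [Fintype V] [DecidableEq V] (G : SimpleGraph V)
    [DecidableRel G.Adj] (κ τ : V → ℤ)
    (h : ∀ u : V, (G.degree u : ℤ) = τ u + κ u) (I : Set V) :
    Degenerate G κ I ↔ IsDynMonopoly G τ (Iᶜ) := by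
  constructor
  · rintro ⟨l, hnd, hset, hcond⟩
    apply Set.eq_univ_of_univ_subset
    intro v _
    refine Set.mem_sInter.2 fun H hH => ?_
    -- key downward induction
    have key : ∀ m j, l.length ≤ j + m → ∀ w ∈ l.drop j, w ∈ H := by
      intro m
      induction m with
      | zero =>
        intro j hj w hw
        rw [List.drop_eq_nil_of_le (by omega)] at hw
        simp at hw
      | succ m ih =>
        intro j hj w hw
        by_cases hjl : l.length ≤ j
        · rw [List.drop_eq_nil_of_le hjl] at hw; simp at hw
        push_neg at hjl
        rw [List.drop_eq_getElem_cons hjl] at hw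
        rcases List.mem_cons.1 hw with rfl | hw'
        swap
        · exact ih (j + 1) (by omega) w hw'
        -- activate l[j]
        set u := l[j]'hjl with hu
        apply hH.2 u
        have hsub : G.neighborSet u \ {w | w ∈ l.take j} ⊆ G.neighborSet u ∩ H := by
          rintro w ⟨hwN, hwT⟩
          refine ⟨hwN, ?_⟩
          by_cases hwI : w ∈ I
          · rw [← hset] at hwI
            have : w ∈ l.take j ++ l.drop j := by
              rw [List.take_append_drop]; exact hwI
            rcases List.mem_append.1 this with h1 | h2
            · exact absurd h1 hwT
            rw [List.drop_eq_getElem_cons hjl] at h2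
            rcases List.mem_cons.1 h2 with rfl | h3
            · exact absurd hwN (by simp [hu])
            · exact ih (j + 1) (by omega) w h3
          · exact hH.1 hwI
        have hcard := Set.ncard_le_ncard hsub (Set.toFinite _)
        have hsplit := Set.ncard_inter_add_ncard_diff_eq_ncard
          (G.neighborSet u) {w | w ∈ l.take j} (Set.toFinite _)
        rw [my_ncard_neighborSet] at hsplit
        have hκ := hcond ⟨j, hjl⟩
        simp only [List.get_eq_getElem] at hκ
        rw [← hu] at hκ
        have hd := h u
        push_cast at hκ hd ⊢
        omega
    have : v ∈ I ∪ Iᶜ := by rw [Set.union_compl_self]; trivial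
    rcases this with hvI | hvC
    · rw [← hset] at hvI
      exact key l.length 0 (by omega) v (by simpa using hvI)
    · exact hH.1 hvC
  · -- backward
    have main : ∀ n (I : Set V), I.ncard = n → IsDynMonopoly G τ Iᶜ → Degenerate G κ I := by
      intro n
      induction n with
      | zero =>
        intro I hI _
        rw [Set.ncard_eq_zero (Set.toFinite I)] at hI
        subst hI
        exact ⟨[], List.nodup_nil, by simp, fun i => absurd i.isLt (by simp)⟩
      | succ n ih =>
        intro I hI hmono
        have hne : I.Nonempty := by
          rw [Set.nonempty_iff_ne_empty]
          intro h0; rw [h0] at hI; simp at hI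
        have hv : ∃ v ∈ I, τ v ≤ ((G.neighborSet v ∩ Iᶜ).ncard : ℤ) := by
          by_contra hc
          push_neg at hc
          have hclosed : HullClosed G τ Iᶜ := by
            intro u hu
            by_contra hu'
            have huI : u ∈ I := by simpa using hu'
            exact absurd hu (not_le.2 (hc u huI))
          have hsub : hull G τ Iᶜ ⊆ Iᶜ := my_hull_subset subset_rfl hclosed
          rw [hmono] at hsub
          obtain ⟨w, hw⟩ := hne
          exact (hsub (Set.mem_univ w)) hw
        obtain ⟨v, hvI, hvτ⟩ := hv
        have hI' : (I \ {v}).ncard = n := by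
          rw [Set.ncard_diff_singleton_of_mem hvI]; omega
        have hmono' : IsDynMonopoly G τ (I \ {v})ᶜ := by
          apply Set.eq_univ_of_univ_subset
          rw [← hmono]
          exact my_hull_mono (by intro x hx; simp at hx ⊢; tauto)
        obtain ⟨l', hnd', hset', hcond'⟩ := ih (I \ {v}) hI' hmono'
        have hvl' : v ∉ l' := by
          intro hmem
          have : v ∈ I \ {v} := by rw [← hset']; exact hmem
          simp at this
        -- the key counting fact for v
        have hvcount : ((G.neighborSet v ∩ (I \ {v})).ncard : ℤ) ≤ κ v := by
          have hvnot : v ∉ G.neighborSet v := by simp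
          have heq : G.neighborSet v ∩ (I \ {v}) = G.neighborSet v \ Iᶜ := by
            ext w
            simp only [Set.mem_inter_iff, Set.mem_diff, Set.mem_singleton_iff,
              Set.mem_compl_iff]
            constructor
            · rintro ⟨h1, h2, _⟩; exact ⟨h1, by simpa using h2⟩
            · rintro ⟨h1, h2⟩
              refine ⟨h1, by simpa using h2, ?_⟩
              rintro rfl; exact hvnot h1
          rw [heq]
          have hsplit := Set.ncard_inter_add_ncard_diff_eq_ncard
            (G.neighborSet v) Iᶜ (Set.toFinite _)
          rw [my_ncard_neighborSet] at hsplit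
          have hd := h v

          omega
        refine ⟨l' ++ [v], ?_, ?_, ?_⟩
        · rw [List.nodup_append]
          exact ⟨hnd', List.nodup_singleton v, fun a ha b hb hab => hvl' (by simp at hb; rw [← hb, ← hab]; exact ha)⟩
        · ext w
          simp only [Set.mem_setOf_eq, List.mem_append, List.mem_singleton]
          constructor
          · rintro (hw | rfl)
            · have : w ∈ I \ {v} := by rw [← hset']; exact hw
              exact this.1
            · exact hvI
          · intro hw
            by_cases hwv : w = v
            · right; exact hwv
            · left
              have : w ∈ I \ {v} := ⟨hw, hwv⟩
              rw [← hset'] at this; exact this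
        · intro i
          have hlen : (l' ++ [v]).length = l'.length + 1 := by simp
          by_cases hi : (i : ℕ) < l'.length
          · have hget : (l' ++ [v]).get i = l'.get ⟨i, hi⟩ := by
              simp only [List.get_eq_getElem]
              exact List.getElem_append_left hi
            have htake : (l' ++ [v]).take (i : ℕ) = l'.take (i : ℕ) := by
              rw [List.take_append]
              have : (i : ℕ) - l'.length = 0 := by omega
              rw [this]
              simp
            rw [hget, htake]
            exact hcond' ⟨i, hi⟩
          · have hie : (i : ℕ) = l'.length := by
              have h2 : (i : ℕ) < l'.length + 1 := by simpa using i.isLt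
              omega
            have hget : (l' ++ [v]).get i = v := by
              simp only [List.get_eq_getElem]
              exact List.getElem_concat_length hie _
            have htake : (l' ++ [v]).take (i : ℕ) = l' := by
              rw [hie]; exact List.take_left
            rw [hget, htake, hset']
            exact hvcount
    intro hmono
    exact main I.ncard I rfl hmono
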